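/- A word identity u ≈ v holds in (hypo_2, ♯) if and only if: (i) u ≈ v is balanced (occ(x, u) = occ(x, v) for every x ∈ X ∪ X*); and (ii) for any x, y ∈ con(u): (a) if x, y ∈ mix(u), then {x, y} ≺_u {x*, y*} iff {x, y} ≺_v {x*, y*}; (b) if x ∈ mix(u) and y ∉ mix(u), then x ≺_u {x*, y} iff x ≺_v {x*, y}, and {x, y} ≺_u x* iff {x, y} ≺_v x*; (c) if x, y ∉ mix(u), then x ≺_u y iff x ≺_v y. -/

import Mathlib

open FreeMonoid in
/-- The defining relations of the hypoplactic monoid of rank `n` (letters `0,…,n-1`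
standing for `1,…,n`): `acb = cab` (`a ≤ b < c`), `bac = bca` (`a < b ≤ c`),
`cadb = acbd` (`a ≤ b < c ≤ d`), `bdac = dbca` (`a < b ≤ c < d`). -/
def HypoRel (n : ℕ) : FreeMonoid (Fin n) → FreeMonoid (Fin n) → Prop := fun u v =>
  (∃ a b c : Fin n, a ≤ b ∧ b < c ∧ u = of a * of c * of b ∧ v = of c * of a * of b) ∨
  (∃ a b c : Fin n, a < b ∧ b ≤ c ∧ u = of b * of a * of c ∧ v = of b * of c * of a) ∨
  (∃ a b c d : Fin n, a ≤ b ∧ b < c ∧ c ≤ d ∧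
    u = of c * of a * of d * of b ∧ v = of a * of c * of b * of d) ∨
  (∃ a b c d : Fin n, a < b ∧ b ≤ c ∧ c < d ∧
    u = of b * of d * of a * of c ∧ v = of d * of b * of c * of a)

/-- The congruence on the free monoid generated by the hypoplactic relations. -/
def hypoCon (n : ℕ) : Con (FreeMonoid (Fin n)) := conGen (HypoRel n)

/-- The hypoplactic monoid of rank `n`. -/
abbrev Hypo (n : ℕ) : Type := (hypoCon n).Quotient

/-- Schützenberger's involution on words: reverse the word and apply the
order-reversing permutation `i ↦ n+1−i` (here `Fin.rev`) to each letter. -/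
def wordSharp (n : ℕ) (w : FreeMonoid (Fin n)) : FreeMonoid (Fin n) :=
  FreeMonoid.ofList (((FreeMonoid.toList w).map Fin.rev).reverse)

theorem wordSharp_mul {n : ℕ} (u v : FreeMonoid (Fin n)) :
    wordSharp n (u * v) = wordSharp n v * wordSharp n u := by
  simp [wordSharp]

theorem wordSharp_of {n : ℕ} (x : Fin n) :
    wordSharp n (FreeMonoid.of x) = FreeMonoid.of x.rev := rfl

/-- The hypoplactic congruence is compatible with Schützenberger's involution. -/
theorem wordSharp_wd {n : ℕ} {u v : FreeMonoid (Fin n)} (h : hypoCon n u v) :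
    hypoCon n (wordSharp n u) (wordSharp n v) := by
  have h' : ConGen.Rel (HypoRel n) u v := h
  clear h
  show ConGen.Rel (HypoRel n) (wordSharp n u) (wordSharp n v)
  induction h' with
  | of u v huv =>
    apply ConGen.Rel.of
    rcases huv with ⟨a,b,c,hab,hbc,hu,hv⟩ | ⟨a,b,c,hab,hbc,hu,hv⟩ |
      ⟨a,b,c,d,hab,hbc,hcd,hu,hv⟩ | ⟨a,b,c,d,hab,hbc,hcd,hu,hv⟩
    · refine Or.inr (Or.inl ⟨c.rev, b.rev, a.rev, Fin.rev_lt_rev.mpr hbc,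
        Fin.rev_le_rev.mpr hab, ?_, ?_⟩)
      · subst hu; simp [wordSharp_mul, wordSharp_of, mul_assoc]
      · subst hv; simp [wordSharp_mul, wordSharp_of, mul_assoc]
    · refine Or.inl ⟨c.rev, b.rev, a.rev, Fin.rev_le_rev.mpr hbc,
        Fin.rev_lt_rev.mpr hab, ?_, ?_⟩
      · subst hu; simp [wordSharp_mul, wordSharp_of, mul_assoc]
      · subst hv; simp [wordSharp_mul, wordSharp_of, mul_assoc]
    · refine Or.inr (Or.inr (Or.inl ⟨d.rev, c.rev, b.rev, a.rev,
        Fin.rev_le_rev.mpr hcd, Fin.rev_lt_rev.mpr hbc, Fin.rev_le_rev.mpr hab, ?_, ?_⟩))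
      · subst hu; simp [wordSharp_mul, wordSharp_of, mul_assoc]
      · subst hv; simp [wordSharp_mul, wordSharp_of, mul_assoc]
    · refine Or.inr (Or.inr (Or.inr ⟨d.rev, c.rev, b.rev, a.rev,
        Fin.rev_lt_rev.mpr hcd, Fin.rev_le_rev.mpr hbc, Fin.rev_lt_rev.mpr hab, ?_, ?_⟩))
      · subst hu; simp [wordSharp_mul, wordSharp_of, mul_assoc]
      · subst hv; simp [wordSharp_mul, wordSharp_of, mul_assoc]
  | refl x => exact ConGen.Rel.refl _
  | symm _ ih => exact ih.symm
  | trans _ _ ih1 ih2 => exact ih1.trans ih2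
  | mul _ _ ih1 ih2 =>
    rw [wordSharp_mul, wordSharp_mul]
    exact ConGen.Rel.mul ih2 ih1

/-- Schützenberger's involution `♯` on the hypoplactic monoid of rank `n`. -/
def hypoSharp (n : ℕ) : Hypo n → Hypo n :=
  Quotient.map' (wordSharp n) fun _ _ h => wordSharp_wd h

/-- Variables: `(n, false)` is the plain variable `x_n`, `(n, true)` is the starred
variable `x_n*`. -/
abbrev Var : Type := ℕ × Bool
/-- A word over the variables `X ∪ X*`. -/
abbrev Word : Type := List Var

/-- The starred counterpart of a variable. -/
def vstar (x : Var) : Var := (x.1, !x.2)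

def evalVar {M : Type*} [Monoid M] (star : M → M) (φ : ℕ → M) (x : Var) : M :=
  if x.2 then star (φ x.1) else φ x.1

/-- Evaluation of a word in a monoid `M` equipped with a unary operation `star`,
under a substitution `φ : X → M` (extended by `φ(x*) = φ(x)*`). -/
def evalW {M : Type*} [Monoid M] (star : M → M) (φ : ℕ → M) (w : Word) : M :=
  (w.map (evalVar star φ)).prod

/-- `(M, star)` satisfies the word identity `u ≈ v`. -/
def SatW {M : Type*} [Monoid M] (star : M → M) (u v : Word) : Prop :=
  ∀ φ : ℕ → M, evalW star φ u = evalW star φ v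

/-- `Prec u x y` : the last occurrence of `x` precedes the first occurrence of `y`
in `u` (every occurrence of `x` is to the left of every occurrence of `y`). -/
def Prec (u : Word) (x y : Var) : Prop :=
  ∀ i j : Fin u.length, u.get i = x → u.get j = y → (i : ℕ) < (j : ℕ)

/-- `{xs} ≺_u {ys}` : pairwise `Prec`. -/
def PrecAll (u : Word) (xs ys : List Var) : Prop :=
  ∀ x ∈ xs, ∀ y ∈ ys, Prec u x y

/-- `x ∈ mix(u)` : both `x` and `x*` occur in `u`. -/
def Mix (u : Word) (x : Var) : Prop := x ∈ u ∧ vstar x ∈ u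
/-- `x ∈ lin(u)` : `x ∉ mix(u)` and `x` occurs exactly once in `u`. -/
def Lin (u : Word) (x : Var) : Prop := ¬ Mix u x ∧ u.count x = 1
/-- `x ∈ ml(u)` : `x ∈ mix(u)` and `x` occurs exactly once in `u`. -/
def Ml (u : Word) (x : Var) : Prop := Mix u x ∧ u.count x = 1
/-- The word identity `u ≈ v` is balanced. -/
def BalancedId (u v : Word) : Prop := ∀ x : Var, u.count x = v.count x

/-- Condition (ii) from the characterizations: for any `x, y ∈ con(u)`,
(a) if `x, y ∈ mix(u)` then `{x,y} ≺_u {x*,y*}` iff `{x,y} ≺_v {x*,y*}`;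
(b) if `x ∈ mix(u)`, `y ∉ mix(u)` then `x ≺_u {x*,y}` iff `x ≺_v {x*,y}` and
`{x,y} ≺_u x*` iff `{x,y} ≺_v x*`;
(c) if `x, y ∉ mix(u)` then `x ≺_u y` iff `x ≺_v y`. -/
def CondII (u v : Word) : Prop :=
  ∀ x y : Var, x ∈ u → y ∈ u →
    ((Mix u x ∧ Mix u y →
      (PrecAll u [x, y] [vstar x, vstar y] ↔ PrecAll v [x, y] [vstar x, vstar y])) ∧
     (Mix u x ∧ ¬ Mix u y →
      ((PrecAll u [x] [vstar x, y] ↔ PrecAll v [x] [vstar x, y]) ∧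
       (PrecAll u [x, y] [vstar x] ↔ PrecAll v [x, y] [vstar x]))) ∧
     (¬ Mix u x ∧ ¬ Mix u y → (Prec u x y ↔ Prec v x y)))


open List in
theorem pair_sublist_iff {γ : Type*} {l : List γ} {a b : γ} :
    [a, b] <+ l ↔ ∃ i j : Fin l.length, (i:ℕ) < j ∧ l.get i = a ∧ l.get j = b := by
  constructor
  · intro h
    induction l with
    | nil => simp at h
    | cons c t ih =>
      rcases List.sublist_cons_iff.mp h with h' | ⟨r, hr, hrt⟩
      · obtain ⟨i, j, hij, ha, hb⟩ := ih h'
        exact ⟨i.succ, j.succ, by simpa using hij, ha, hb⟩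
      · obtain ⟨rfl, rfl⟩ : a = c ∧ r = [b] := by
          cases hr; exact ⟨rfl, rfl⟩
        have hb : b ∈ t := List.singleton_sublist.mp hrt
        obtain ⟨j, hj⟩ := List.mem_iff_get.mp hb
        exact ⟨⟨0, by simp⟩, j.succ, by simp, rfl, hj⟩
  · rintro ⟨i, j, hij, ha, hb⟩
    induction l with
    | nil => exact absurd i.2 (by simp)
    | cons c t ih =>
      rcases Fin.eq_zero_or_eq_succ i with rfl | ⟨i', rfl⟩
      · subst ha
        rcases Fin.eq_zero_or_eq_succ j with rfl | ⟨j', rfl⟩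
        · simp at hij
        · have hb' : b ∈ t := by
            rw [← hb, List.get_cons_succ']; exact List.get_mem _ _
          exact List.cons_sublist_cons.mpr (List.singleton_sublist.mpr hb')
      · rcases Fin.eq_zero_or_eq_succ j with rfl | ⟨j', rfl⟩
        · simp at hij
        · exact (ih i' j' (by simpa using hij) ha hb).cons c

/-- Concrete model of `hypo₂`: `(p, q, b)` with `p` = number of `0`s (letter `1`),
`q` = number of `1`s (letter `2`), `b` = whether some `1` precedes some `0`. -/
@[ext] structure MM where
  p : ℕ
  q : ℕ
  b : Bool
deriving DecidableEq

instance : Mul MM :=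
  ⟨fun m n => ⟨m.p + n.p, m.q + n.q, m.b || n.b || (decide (0 < m.q) && decide (0 < n.p))⟩⟩

instance : One MM := ⟨⟨0, 0, false⟩⟩

theorem MM.mul_def (m n : MM) :
    m * n = ⟨m.p + n.p, m.q + n.q, m.b || n.b || (decide (0 < m.q) && decide (0 < n.p))⟩ :=
  rfl

theorem MM.one_def : (1 : MM) = ⟨0, 0, false⟩ := rfl

instance : Monoid MM where
  mul_assoc a b c := by
    rcases a with ⟨ap, aq, ab⟩; rcases b with ⟨bp, bq, bb⟩; rcases c with ⟨cp, cq, cb⟩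
    simp only [MM.mul_def]
    refine MM.ext (by dsimp only; omega) (by dsimp only; omega) ?_
    dsimp only
    cases ab <;> cases bb <;> cases cb <;>
      simp only [Bool.false_or, Bool.true_or, Bool.or_true, Bool.or_false, Bool.or_assoc] <;>
      rw [Bool.eq_iff_iff] <;>
      simp only [Bool.or_eq_true, Bool.and_eq_true, decide_eq_true_eq] <;> omega
  one_mul a := by simp [MM.mul_def, MM.one_def]
  mul_one a := by simp [MM.mul_def, MM.one_def]

def sharpM (m : MM) : MM := ⟨m.q, m.p, m.b⟩

theorem sharpM_mul (m n : MM) : sharpM (m * n) = sharpM n * sharpM m := by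
  simp only [MM.mul_def, sharpM]
  refine MM.ext (by dsimp only; omega) (by dsimp only; omega) ?_
  dsimp only
  cases m.b <;> cases n.b <;>
    simp [Bool.or_comm, Bool.and_comm]

def gen : Fin 2 → MM := fun i => if i.val = 0 then ⟨1, 0, false⟩ else ⟨0, 1, false⟩

def fm : FreeMonoid (Fin 2) →* MM := FreeMonoid.lift gen

theorem fm_of (a : Fin 2) : fm (FreeMonoid.of a) = gen a := FreeMonoid.lift_eval_of _ _

theorem fm_rel : ∀ x y, HypoRel 2 x y → fm x = fm y := by
  intro x y h
  rcases h with ⟨a,b,c,hab,hbc,rfl,rfl⟩|⟨a,b,c,hab,hbc,rfl,rfl⟩|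
    ⟨a,b,c,d,hab,hbc,hcd,rfl,rfl⟩|⟨a,b,c,d,hab,hbc,hcd,rfl,rfl⟩ <;>
    simp only [map_mul, fm_of] <;>
    fin_cases a <;> fin_cases b <;> fin_cases c <;> first
      | (fin_cases d <;> first | rfl | omega | simp_all | decide) | rfl | omega | simp_all | decide

/-- The invariant map `Hypo 2 →* MM`. -/
def gH : Hypo 2 →* MM :=
  Con.lift (hypoCon 2) fm (Con.conGen_le.mpr fun x y h => (Con.ker_rel fm).mpr (fm_rel x y h))

theorem gH_mk (w : FreeMonoid (Fin 2)) : gH ((hypoCon 2).toQuotient w) = fm w := rfl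

theorem fm_wordSharp (w : FreeMonoid (Fin 2)) : fm (wordSharp 2 w) = sharpM (fm w) := by
  induction w using FreeMonoid.recOn with
  | one => rfl
  | of_mul a w ih =>
    rw [wordSharp_mul, map_mul, ih, map_mul, sharpM_mul]
    congr 1
    rw [wordSharp_of, fm_of, fm_of]
    fin_cases a <;> rfl

namespace HypoTwo

/-- letter `1` (index 0) -/
noncomputable abbrev z : FreeMonoid (Fin 2) := FreeMonoid.of 0
/-- letter `2` (index 1) -/
noncomputable abbrev o : FreeMonoid (Fin 2) := FreeMonoid.of 1

theorem r1 : hypoCon 2 (z * o * z) (o * z * z) :=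
  ConGen.Rel.of _ _ (Or.inl ⟨0, 0, 1, le_refl _, by decide, rfl, rfl⟩)

theorem r2 : hypoCon 2 (o * z * o) (o * o * z) :=
  ConGen.Rel.of _ _ (Or.inr (Or.inl ⟨0, 1, 1, by decide, le_refl _, rfl, rfl⟩))

theorem r3 : hypoCon 2 (o * z * o * z) (z * o * z * o) :=
  ConGen.Rel.of _ _ (Or.inr (Or.inr (Or.inl ⟨0, 0, 1, 1, le_refl _, by decide, le_refl _, rfl, rfl⟩)))

theorem L1 : ∀ p : ℕ, hypoCon 2 (o * z ^ (p + 1)) (z ^ p * (o * z))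
  | 0 => by
    rw [pow_one, pow_zero, one_mul]
    exact (hypoCon 2).refl _
  | (p + 1) => by
    have ih := L1 p
    have h1 : o * z ^ (p + 2) = o * z ^ (p + 1) * z := by
      rw [pow_succ, ← mul_assoc]
    have h2 : z ^ p * (o * z) * z = z ^ p * (o * z * z) := by
      rw [mul_assoc]
    have h3 : z ^ p * (z * o * z) = z ^ (p + 1) * (o * z) := by
      simp [pow_succ, mul_assoc]
    rw [h1, ← h3]
    refine ((hypoCon 2).mul ih ((hypoCon 2).refl z)).trans ?_
    rw [h2]
    exact (hypoCon 2).mul ((hypoCon 2).refl _) ((hypoCon 2).symm r1)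

theorem K1 : ∀ p : ℕ, hypoCon 2 (o * (z ^ p * (o * z))) (z ^ p * (o * z) * o)
  | 0 => by
    simp only [pow_zero, one_mul]
    have e1 : o * (o * z) = o * o * z := by rw [mul_assoc]
    rw [e1]
    exact (hypoCon 2).symm r2
  | (p + 1) => by
    have e1 : o * (z ^ (p + 1) * (o * z)) = o * z ^ (p + 1) * (o * z) := by
      rw [mul_assoc]
    rw [e1]
    refine ((hypoCon 2).mul (L1 p) ((hypoCon 2).refl (o * z))).trans ?_
    have e2 : z ^ p * (o * z) * (o * z) = z ^ p * (o * z * o * z) := by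
      rw [mul_assoc, ← mul_assoc (o*z) o z]
    have e3 : z ^ p * (z * o * z * o) = z ^ (p + 1) * (o * z) * o := by
      simp [pow_succ, mul_assoc]
    rw [e2, ← e3]
    exact (hypoCon 2).mul ((hypoCon 2).refl _) r3

/-- invariant of words: a descent forces positive counts -/
def InvM (m : MM) : Prop := m.b = true → 0 < m.p ∧ 0 < m.q

theorem InvM_mul {m n : MM} (hm : InvM m) (hn : InvM n) : InvM (m * n) := by
  intro h
  simp only [MM.mul_def] at h ⊢
  simp only [Bool.or_eq_true, Bool.and_eq_true, decide_eq_true_eq] at h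
  rcases h with (h | h) | ⟨h1, h2⟩
  · have := hm h; omega
  · have := hn h; omega
  · omega

theorem InvM_fm (w : FreeMonoid (Fin 2)) : InvM (fm w) := by
  induction w using FreeMonoid.recOn with
  | one => intro h; simp [MM.one_def, map_one] at h
  | of_mul a w ih =>
    rw [map_mul, fm_of]
    refine InvM_mul ?_ ih
    fin_cases a <;> (intro h; simp [gen] at h)

/-- canonical word for an element of `MM` -/
noncomputable def canonW (m : MM) : FreeMonoid (Fin 2) :=
  if m.b then z ^ (m.p - 1) * (o * z) * o ^ (m.q - 1) else z ^ m.p * o ^ m.q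

theorem toCanon (w : FreeMonoid (Fin 2)) : hypoCon 2 w (canonW (fm w)) := by
  induction w using FreeMonoid.recOn with
  | one =>
    have : canonW (fm 1) = 1 := by
      rw [map_one]; simp [canonW, MM.one_def]
    rw [this]; exact (hypoCon 2).refl _
  | of_mul a w ih =>
    refine ((hypoCon 2).mul ((hypoCon 2).refl (FreeMonoid.of a)) ih).trans ?_
    rw [map_mul, fm_of]
    have hInv := InvM_fm w
    set m := fm w with hm
    clear_value m
    clear ih hm
    fin_cases a
    · -- a = 0
      have hg : gen 0 * m = ⟨m.p + 1, m.q, m.b⟩ := by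
        simp [gen, MM.mul_def]; omega
      show (hypoCon 2) (z * canonW m) (canonW (gen 0 * m))
      rw [hg]
      cases hb : m.b
      · simp only [canonW, hb, Bool.false_eq_true, if_true, if_false, reduceIte]
        have : z * (z ^ m.p * o ^ m.q) = z ^ (m.p + 1) * o ^ m.q := by
          simp [pow_succ', mul_assoc]
        rw [this]
        exact (hypoCon 2).refl _
      · obtain ⟨hp, hq⟩ := hInv hb
        simp only [canonW, hb, if_true, reduceIte]
        rw [show m.p + 1 - 1 = (m.p - 1) + 1 from by omega]
        have : z * (z ^ (m.p - 1) * (o * z) * o ^ (m.q - 1))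
            = z ^ (m.p - 1 + 1) * (o * z) * o ^ (m.q - 1) := by
          simp [pow_succ', mul_assoc]
        rw [this]
        exact (hypoCon 2).refl _
    · -- a = 1
      show (hypoCon 2) (o * canonW m) (canonW (gen 1 * m))
      cases hb : m.b
      · rcases Nat.eq_zero_or_pos m.p with hp | hp
        · have hg : gen 1 * m = ⟨m.p, m.q + 1, false⟩ := by
            simp [gen, MM.mul_def, hb, hp] <;> omega
          rw [hg]
          simp only [canonW, hb, hp, Bool.false_eq_true, if_false, reduceIte]
          have : o * (z ^ 0 * o ^ m.q) = z ^ 0 * o ^ (m.q + 1) := by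
            simp [pow_succ', pow_zero, one_mul]
          rw [this]
          exact (hypoCon 2).refl _
        · have hg : gen 1 * m = ⟨m.p, m.q + 1, true⟩ := by
            simp [gen, MM.mul_def, hb] <;> omega
          rw [hg]
          simp only [canonW, hb, Bool.false_eq_true, if_false, if_true, reduceIte]
          rw [show m.q + 1 - 1 = m.q from by omega]
          have e : o * (z ^ m.p * o ^ m.q) = (o * z ^ (m.p - 1 + 1)) * o ^ m.q := by
            rw [show m.p - 1 + 1 = m.p from by omega, ← mul_assoc]
          rw [e]
          exact (hypoCon 2).mul (L1 (m.p - 1)) ((hypoCon 2).refl (o ^ m.q))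
      · obtain ⟨hp, hq⟩ := hInv hb
        have hg : gen 1 * m = ⟨m.p, m.q + 1, true⟩ := by
          simp [gen, MM.mul_def, hb] <;> omega
        rw [hg]
        simp only [canonW, hb, if_true, reduceIte]
        have e : o * (z ^ (m.p - 1) * (o * z) * o ^ (m.q - 1))
            = (o * (z ^ (m.p - 1) * (o * z))) * o ^ (m.q - 1) := by
          rw [← mul_assoc]
        rw [e]
        refine ((hypoCon 2).mul (K1 (m.p - 1)) ((hypoCon 2).refl (o ^ (m.q - 1)))).trans ?_
        have e2 : z ^ (m.p - 1) * (o * z) * o * o ^ (m.q - 1)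
            = z ^ (m.p - 1) * (o * z) * o ^ (m.q + 1 - 1) := by
          rw [mul_assoc, ← pow_succ', show m.q - 1 + 1 = m.q + 1 - 1 from by omega]
        rw [e2]
        exact (hypoCon 2).refl _

theorem gH_injective : Function.Injective gH := by
  intro x y
  refine Con.induction_on₂ x y fun w1 w2 h => ?_
  rw [gH_mk, gH_mk] at h
  have h1 := toCanon w1
  have h2 := toCanon w2
  rw [h] at h1
  exact (Con.eq _).mpr (h1.trans ((hypoCon 2).symm h2))

end HypoTwo

theorem gH_sharp (x : Hypo 2) : gH (hypoSharp 2 x) = sharpM (gH x) := by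
  refine Con.induction_on x fun w => ?_
  have : hypoSharp 2 ((hypoCon 2).toQuotient w) = (hypoCon 2).toQuotient (wordSharp 2 w) :=
    Quotient.map'_mk'' _ _ w
  rw [this, gH_mk, gH_mk, fm_wordSharp]

theorem evalVar_hom {M N : Type*} [Monoid M] [Monoid N] (h : M →* N)
    (sM : M → M) (sN : N → N) (hc : ∀ x, h (sM x) = sN (h x)) (φ : ℕ → M) (x : Var) :
    h (evalVar sM φ x) = evalVar sN (fun n => h (φ n)) x := by
  unfold evalVar
  split <;> simp [hc]

theorem evalW_hom {M N : Type*} [Monoid M] [Monoid N] (h : M →* N)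
    (sM : M → M) (sN : N → N) (hc : ∀ x, h (sM x) = sN (h x)) (φ : ℕ → M) (w : Word) :
    h (evalW sM φ w) = evalW sN (fun n => h (φ n)) w := by
  unfold evalW
  rw [map_list_prod, List.map_map]
  congr 1
  exact List.map_congr_left fun x _ => evalVar_hom h sM sN hc φ x

theorem prod_p (l : List MM) : l.prod.p = (l.map MM.p).sum := by
  induction l with
  | nil => rfl
  | cons m t ih => rw [List.prod_cons, List.map_cons, List.sum_cons, MM.mul_def, ← ih]

theorem prod_q (l : List MM) : l.prod.q = (l.map MM.q).sum := by
  induction l with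
  | nil => rfl
  | cons m t ih => rw [List.prod_cons, List.map_cons, List.sum_cons, MM.mul_def, ← ih]

theorem prod_p_pos (l : List MM) : 0 < l.prod.p ↔ ∃ m ∈ l, 0 < m.p := by
  rw [prod_p]
  constructor
  · intro h
    by_contra hc
    push_neg at hc
    have : (l.map MM.p).sum = 0 :=
      List.sum_eq_zero_iff.mpr (by
        intro x hx
        obtain ⟨m, hm, rfl⟩ := List.mem_map.mp hx
        exact Nat.le_zero.mp (hc m hm))
    omega
  · rintro ⟨m, hm, hp⟩
    have h1 : m.p ≤ (l.map MM.p).sum :=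
      List.single_le_sum (fun _ _ => Nat.zero_le _) _ (List.mem_map_of_mem (f := MM.p) hm)
    omega

open List in
theorem prod_b (l : List MM) : l.prod.b = true ↔
    (∃ m ∈ l, m.b = true) ∨ ∃ m₁ m₂ : MM, [m₁, m₂] <+ l ∧ 0 < m₁.q ∧ 0 < m₂.p := by
  induction l with
  | nil => simp [MM.one_def]
  | cons m t ih =>
    rw [List.prod_cons, MM.mul_def]
    simp only [Bool.or_eq_true, Bool.and_eq_true, decide_eq_true_eq]
    constructor
    · rintro ((h | h) | ⟨h1, h2⟩)
      · exact Or.inl ⟨m, by simp, h⟩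
      · rcases ih.mp h with ⟨m', hm', hb⟩ | ⟨m₁, m₂, hs, h1, h2⟩
        · exact Or.inl ⟨m', by simp [hm'], hb⟩
        · exact Or.inr ⟨m₁, m₂, hs.cons m, h1, h2⟩
      · obtain ⟨m₂, hm₂, hp⟩ := (prod_p_pos t).mp h2
        exact Or.inr ⟨m, m₂, List.cons_sublist_cons.mpr (List.singleton_sublist.mpr hm₂), h1, hp⟩
    · rintro (⟨m', hm', hb⟩ | ⟨m₁, m₂, hs, h1, h2⟩)
      · rcases List.mem_cons.mp hm' with rfl | hm'
        · exact Or.inl (Or.inl hb)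
        · exact Or.inl (Or.inr (ih.mpr (Or.inl ⟨m', hm', hb⟩)))
      · rcases List.sublist_cons_iff.mp hs with hs' | ⟨r, hr, hrt⟩
        · exact Or.inl (Or.inr (ih.mpr (Or.inr ⟨m₁, m₂, hs', h1, h2⟩)))
        · obtain ⟨rfl, rfl⟩ : m₁ = m ∧ r = [m₂] := by cases hr; exact ⟨rfl, rfl⟩
          refine Or.inr ⟨h1, ?_⟩
          exact (prod_p_pos t).mpr ⟨m₂, List.singleton_sublist.mp hrt, h2⟩

theorem vstar_vstar (x : Var) : vstar (vstar x) = x := by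
  cases x with
  | mk n b => simp [vstar]

theorem evalVar_q_eq (ψ : ℕ → MM) (x : Var) :
    (evalVar sharpM ψ x).q = (evalVar sharpM ψ (vstar x)).p := by
  cases x with
  | mk n b => cases b <;> rfl

theorem evalVar_b_eq (ψ : ℕ → MM) (x : Var) :
    (evalVar sharpM ψ x).b = (ψ x.1).b := by
  cases x with
  | mk n b => cases b <;> rfl

/-- The key combinatorial data extracted from a word: `Ew w S` iff there are
(possibly equal) variables `a, b` in `S` with an occurrence of `a*` strictly
before an occurrence of `b`. -/
def Ew (w : Word) (S : Var → Prop) : Prop :=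
  ∃ a b : Var, S a ∧ S b ∧ [vstar a, b].Sublist w

open List in
theorem evalW_b_iff (ψ : ℕ → MM) (w : Word) :
    (evalW sharpM ψ w).b = true ↔
      (∃ x ∈ w, (ψ x.1).b = true) ∨ Ew w (fun a => 0 < (evalVar sharpM ψ a).p) := by
  unfold evalW
  rw [prod_b]
  constructor
  · rintro (⟨m, hm, hb⟩ | ⟨m₁, m₂, hs, h1, h2⟩)
    · obtain ⟨x, hx, rfl⟩ := List.mem_map.mp hm
      exact Or.inl ⟨x, hx, (evalVar_b_eq ψ x) ▸ hb⟩
    · obtain ⟨l', hl', hmap⟩ := List.sublist_map_iff.mp hs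
      match l', hmap with
      | [a', b'], hmap =>
        obtain ⟨ha', hb'⟩ : evalVar sharpM ψ a' = m₁ ∧ evalVar sharpM ψ b' = m₂ := by
          simpa using hmap.symm
        refine Or.inr ⟨vstar a', b', ?_, ?_, ?_⟩
        · show 0 < (evalVar sharpM ψ (vstar a')).p
          rw [← evalVar_q_eq, ha']; exact h1
        · show 0 < (evalVar sharpM ψ b').p
          rw [hb']; exact h2
        · rwa [vstar_vstar]
  · rintro (⟨x, hx, hb⟩ | ⟨a, b, ha, hb, hs⟩)
    · exact Or.inl ⟨evalVar sharpM ψ x, List.mem_map_of_mem hx, (evalVar_b_eq ψ x) ▸ hb⟩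
    · refine Or.inr ⟨evalVar sharpM ψ (vstar a), evalVar sharpM ψ b, ?_, ?_, hb⟩
      · have := hs.map (evalVar sharpM ψ)
        simpa using this
      · rw [evalVar_q_eq, vstar_vstar]; exact ha

open HypoTwo

/-- test word with `p` zeros and `q` ones, `p, q ∈ {0,1}` -/
noncomputable def cw (pb qb : Bool) : FreeMonoid (Fin 2) :=
  (if pb then z else 1) * (if qb then o else 1)

theorem fm_cw (pb qb : Bool) :
    fm (cw pb qb) = ⟨if pb then 1 else 0, if qb then 1 else 0, false⟩ := by
  cases pb <;> cases qb <;>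
    simp [cw, fm_of, gen, MM.mul_def, MM.one_def, map_one, map_mul]

/-- boolean test assignment in `MM` associated to a set `S` of variables -/
def psib (S : Var → Bool) : ℕ → MM :=
  fun n => ⟨if S (n, false) then 1 else 0, if S (n, true) then 1 else 0, false⟩

theorem gH_cw (S : Var → Bool) (n : ℕ) :
    gH ((hypoCon 2).toQuotient (cw (S (n, false)) (S (n, true)))) = psib S n := by
  rw [gH_mk, fm_cw]; rfl

theorem psib_evp (S : Var → Bool) (a : Var) :
    (evalVar sharpM (psib S) a).p = if S a then 1 else 0 := by
  obtain ⟨k, fl⟩ := a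
  cases fl <;> rfl

theorem psib_evq (S : Var → Bool) (a : Var) :
    (evalVar sharpM (psib S) a).q = if S (vstar a) then 1 else 0 := by
  obtain ⟨k, fl⟩ := a
  cases fl <;> rfl

theorem psib_evb (S : Var → Bool) (a : Var) :
    (evalVar sharpM (psib S) a).b = false := by
  obtain ⟨k, fl⟩ := a
  cases fl <;> rfl

theorem sum_map_ite (l : List Var) (c : Var) :
    (l.map (fun a => if a = c then 1 else 0)).sum = l.count c := by
  induction l with
  | nil => rfl
  | cons a t ih =>
    rw [List.map_cons, List.sum_cons, ih, List.count_cons]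
    by_cases h : a = c <;> simp [h, beq_iff_eq] <;> omega

theorem count_bridge (l : List Var) (x : Var) :
    l.count x = @List.count Var instBEqOfDecidableEq x l := by
  induction l with
  | nil => rfl
  | cons a t ih =>
    rw [List.count_cons, @List.count_cons Var instBEqOfDecidableEq, ih]
    by_cases h : a = x <;> simp [h, instBEqOfDecidableEq]

theorem satW_balanced {u v : Word} (h : SatW (hypoSharp 2) u v) : BalancedId u v := by
  intro x
  obtain ⟨m, fl⟩ := x
  set S : Var → Bool := fun a => decide (a = (m, false)) with hS
  have hφ := h (fun n => (hypoCon 2).toQuotient (cw (S (n, false)) (S (n, true))))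
  have h2 := congrArg gH hφ
  rw [evalW_hom gH _ sharpM gH_sharp, evalW_hom gH _ sharpM gH_sharp] at h2
  have hψ : (fun n => gH ((hypoCon 2).toQuotient (cw (S (n, false)) (S (n, true))))) = psib S :=
    funext fun n => gH_cw S n
  rw [hψ] at h2
  have key : ∀ w : Word, (evalW sharpM (psib S) w).p = w.count (m, false) ∧
      (evalW sharpM (psib S) w).q = w.count (m, true) := by
    intro w
    constructor
    · rw [show evalW sharpM (psib S) w = (w.map (evalVar sharpM (psib S))).prod from rfl,
        prod_p, List.map_map, ← sum_map_ite w (m, false)]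
      congr 1
      refine List.map_congr_left fun a _ => ?_
      simp only [Function.comp_apply, psib_evp, hS]
      by_cases h : a = (m, false) <;> simp [h]
    · rw [show evalW sharpM (psib S) w = (w.map (evalVar sharpM (psib S))).prod from rfl,
        prod_q, List.map_map, ← sum_map_ite w (m, true)]
      congr 1
      refine List.map_congr_left fun a _ => ?_
      simp only [Function.comp_apply, psib_evq, hS]
      obtain ⟨k, flg⟩ := a
      cases flg <;> simp [vstar, Prod.ext_iff] <;>
        by_cases h : k = m <;> simp [h]
  obtain ⟨hup, huq⟩ := key u
  obtain ⟨hvp, hvq⟩ := key v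
  cases fl
  · rw [← hup, ← hvp, h2]
  · rw [← huq, ← hvq, h2]

theorem Ew_congr {w : Word} {S T : Var → Prop} (h : ∀ a, S a ↔ T a) : Ew w S ↔ Ew w T := by
  unfold Ew
  constructor
  · rintro ⟨a, b, ha, hb, hs⟩
    exact ⟨a, b, (h a).mp ha, (h b).mp hb, hs⟩
  · rintro ⟨a, b, ha, hb, hs⟩
    exact ⟨a, b, (h a).mpr ha, (h b).mpr hb, hs⟩

theorem satW_E {u v : Word} (h : SatW (hypoSharp 2) u v) (S : Var → Bool) :
    (Ew u (fun a => S a = true) ↔ Ew v (fun a => S a = true)) := by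
  have hφ := h (fun n => (hypoCon 2).toQuotient (cw (S (n, false)) (S (n, true))))
  have h2 := congrArg gH hφ
  rw [evalW_hom gH _ sharpM gH_sharp, evalW_hom gH _ sharpM gH_sharp] at h2
  have hψ : (fun n => gH ((hypoCon 2).toQuotient (cw (S (n, false)) (S (n, true))))) = psib S :=
    funext fun n => gH_cw S n
  rw [hψ] at h2
  have hb := congrArg MM.b h2
  have key : ∀ w : Word, ((evalW sharpM (psib S) w).b = true ↔ Ew w (fun a => S a = true)) := by
    intro w
    rw [evalW_b_iff]
    constructor
    · rintro (⟨x, hx, hbx⟩ | hE)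
      · exact absurd hbx (by simp [psib])
      · refine (Ew_congr fun a => ?_).mp hE
        rw [psib_evp]
        by_cases h : S a <;> simp [h]
    · intro hE
      refine Or.inr ((Ew_congr fun a => ?_).mp hE)
      rw [psib_evp]
      by_cases h : S a <;> simp [h]
  rw [← key u, ← key v, hb]

theorem E_to_satW {u v : Word} (hbal : BalancedId u v)
    (hE : ∀ S : Var → Prop, Ew u S ↔ Ew v S) : SatW (hypoSharp 2) u v := by
  intro φ
  have hperm : u.Perm v := List.perm_iff_count.mpr fun x => by
    exact hbal x
  apply gH_injective
  rw [evalW_hom gH _ sharpM gH_sharp, evalW_hom gH _ sharpM gH_sharp]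
  set ψ : ℕ → MM := fun n => gH (φ n) with hψ
  refine MM.ext ?_ ?_ ?_
  · rw [show evalW sharpM ψ u = (u.map (evalVar sharpM ψ)).prod from rfl,
      show evalW sharpM ψ v = (v.map (evalVar sharpM ψ)).prod from rfl, prod_p, prod_p]
    exact ((hperm.map _).map MM.p).sum_eq
  · rw [show evalW sharpM ψ u = (u.map (evalVar sharpM ψ)).prod from rfl,
      show evalW sharpM ψ v = (v.map (evalVar sharpM ψ)).prod from rfl, prod_q, prod_q]
    exact ((hperm.map _).map MM.q).sum_eq
  · rw [Bool.eq_iff_iff, evalW_b_iff, evalW_b_iff]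
    constructor
    · rintro (⟨x, hx, hbx⟩ | hEu)
      · exact Or.inl ⟨x, hperm.mem_iff.mp hx, hbx⟩
      · exact Or.inr ((hE _).mp hEu)
    · rintro (⟨x, hx, hbx⟩ | hEv)
      · exact Or.inl ⟨x, hperm.mem_iff.mpr hx, hbx⟩
      · exact Or.inr ((hE _).mpr hEv)

theorem vstar_ne (c : Var) : vstar c ≠ c := by
  obtain ⟨n, b⟩ := c
  cases b <;> simp [vstar]

theorem vstar_inj {a b : Var} (h : vstar a = vstar b) : a = b := by
  rw [← vstar_vstar a, h, vstar_vstar]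

theorem balanced_mem {u v : Word} (h : BalancedId u v) (x : Var) : x ∈ u ↔ x ∈ v := by
  rw [← List.count_pos_iff, ← List.count_pos_iff, h x]

theorem balanced_mix {u v : Word} (h : BalancedId u v) (x : Var) : Mix u x ↔ Mix v x := by
  unfold Mix
  rw [balanced_mem h, balanced_mem h]

theorem balanced_symm {u v : Word} (h : BalancedId u v) : BalancedId v u :=
  fun x => (h x).symm

theorem condII_symm {u v : Word} (hbal : BalancedId u v) (h : CondII u v) : CondII v u := by
  intro x y hxv hyv
  have hxu := (balanced_mem hbal x).mpr hxv
  have hyu := (balanced_mem hbal y).mpr hyv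
  obtain ⟨h1, h2, h3⟩ := h x y hxu hyu
  refine ⟨?_, ?_, ?_⟩
  · rintro ⟨hmx, hmy⟩
    exact (h1 ⟨(balanced_mix hbal x).mpr hmx, (balanced_mix hbal y).mpr hmy⟩).symm
  · rintro ⟨hmx, hmy⟩
    obtain ⟨ha, hb⟩ := h2 ⟨(balanced_mix hbal x).mpr hmx, fun hc => hmy ((balanced_mix hbal y).mp hc)⟩
    exact ⟨ha.symm, hb.symm⟩
  · rintro ⟨hmx, hmy⟩
    exact (h3 ⟨fun hc => hmx ((balanced_mix hbal x).mp hc),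
      fun hc => hmy ((balanced_mix hbal y).mp hc)⟩).symm

theorem prec_iff_not_sublist {w : Word} {x y : Var} (hxy : y ≠ x) :
    Prec w x y ↔ ¬ ([y, x].Sublist w) := by
  constructor
  · intro hp hc
    obtain ⟨i, j, hij, hy, hx⟩ := pair_sublist_iff.mp hc
    have := hp j i hx hy
    omega
  · intro h i j hx hy
    by_contra hij
    push_neg at hij
    rcases Nat.lt_or_ge (j : ℕ) (i : ℕ) with h1 | h1
    · exact h (pair_sublist_iff.mpr ⟨j, i, h1, hy, hx⟩)
    · have : (i : ℕ) = (j : ℕ) := by omega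
      exact hxy (by rw [← hy, ← hx, Fin.ext this])

theorem not_prec_self {w : Word} {x : Var} (hx : x ∈ w) : ¬ Prec w x x := by
  obtain ⟨i, hi⟩ := List.mem_iff_get.mp hx
  intro hp
  exact absurd (hp i i hi hi) (lt_irrefl _)

theorem prec_absurd {w : Word} {x y : Var} (hs : [x, y].Sublist w) (hp : Prec w y x) : False := by
  obtain ⟨i, j, hij, hx, hy⟩ := pair_sublist_iff.mp hs
  have := hp j i hy hx
  omega

theorem precAll_pair {w : Word} {x y s t : Var} :
    PrecAll w [x, y] [s, t] ↔ Prec w x s ∧ Prec w x t ∧ Prec w y s ∧ Prec w y t := by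
  constructor
  · intro h
    exact ⟨h x (by simp) s (by simp), h x (by simp) t (by simp),
      h y (by simp) s (by simp), h y (by simp) t (by simp)⟩
  · rintro ⟨h1, h2, h3, h4⟩ a ha b hb
    rcases List.mem_pair.mp ha with rfl | rfl <;> rcases List.mem_pair.mp hb with rfl | rfl <;>
      assumption

theorem precAll_single_pair {w : Word} {x s t : Var} :
    PrecAll w [x] [s, t] ↔ Prec w x s ∧ Prec w x t := by
  constructor
  · intro h
    exact ⟨h x (by simp) s (by simp), h x (by simp) t (by simp)⟩
  · rintro ⟨h1, h2⟩ a ha b hb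
    rcases List.mem_singleton.mp ha with rfl
    rcases List.mem_pair.mp hb with rfl | rfl <;> assumption

theorem precAll_pair_single {w : Word} {x y s : Var} :
    PrecAll w [x, y] [s] ↔ Prec w x s ∧ Prec w y s := by
  constructor
  · intro h
    exact ⟨h x (by simp) s (by simp), h y (by simp) s (by simp)⟩
  · rintro ⟨h1, h2⟩ a ha b hb
    rcases List.mem_singleton.mp hb with rfl
    rcases List.mem_pair.mp ha with rfl | rfl <;> assumption

theorem Ew_pair {w : Word} {c d : Var} :
    Ew w (fun a => a = c ∨ a = d) ↔
      ([vstar c, c].Sublist w ∨ [vstar c, d].Sublist w ∨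
       [vstar d, c].Sublist w ∨ [vstar d, d].Sublist w) := by
  constructor
  · rintro ⟨a, b, (rfl | rfl), (rfl | rfl), hs⟩ <;> tauto
  · rintro (h | h | h | h)
    · exact ⟨c, c, Or.inl rfl, Or.inl rfl, h⟩
    · exact ⟨c, d, Or.inl rfl, Or.inr rfl, h⟩
    · exact ⟨d, c, Or.inr rfl, Or.inl rfl, h⟩
    · exact ⟨d, d, Or.inr rfl, Or.inr rfl, h⟩

theorem not_sublist_left {w : Word} {c d : Var} (hc : c ∉ w) : ¬ [c, d].Sublist w :=
  fun hs => hc (hs.subset (by simp))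

theorem not_sublist_right {w : Word} {c d : Var} (hd : d ∉ w) : ¬ [c, d].Sublist w :=
  fun hs => hd (hs.subset (by simp))

theorem E_to_condII {u v : Word} (hbal : BalancedId u v)
    (hE : ∀ S : Var → Bool, (Ew u (fun a => S a = true) ↔ Ew v (fun a => S a = true))) :
    CondII u v := by
  have hE' : ∀ c d : Var, (Ew u (fun a => a = c ∨ a = d) ↔ Ew v (fun a => a = c ∨ a = d)) := by
    intro c d
    have h := hE (fun a => decide (a = c ∨ a = d))
    refine ((Ew_congr fun a => ?_).trans h).trans (Ew_congr fun a => ?_) <;> simp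
  intro x y hxu hyu
  refine ⟨?_, ?_, ?_⟩
  · -- (a) x, y both mixed
    rintro ⟨hmx, hmy⟩
    have hmxv := (balanced_mix hbal x).mp hmx
    by_cases hyx : y = vstar x
    · subst hyx
      have bad : ∀ (w : Word), x ∈ w → vstar x ∈ w →
          ¬ PrecAll w [x, vstar x] [vstar x, vstar (vstar x)] := by
        intro w hxw hxsw hp
        have h1 : Prec w x (vstar x) := hp x (by simp) (vstar x) (by simp)
        have h2 : Prec w (vstar x) (vstar (vstar x)) := hp (vstar x) (by simp) _ (by simp)
        rw [vstar_vstar] at h2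
        obtain ⟨i, hi⟩ := List.mem_iff_get.mp hxw
        obtain ⟨j, hj⟩ := List.mem_iff_get.mp hxsw
        have := h1 i j hi hj
        have := h2 j i hj hi
        omega
      constructor
      · intro hp; exact absurd hp (bad u hxu hmx.2)
      · intro hp; exact absurd hp (bad v ((balanced_mem hbal x).mp hxu) hmxv.2)
    · have hxy' : x ≠ vstar y := fun hc => hyx (by rw [hc, vstar_vstar])
      have key : ∀ w : Word, (PrecAll w [x, y] [vstar x, vstar y] ↔
          ¬ Ew w (fun a => a = x ∨ a = y)) := by
        intro w
        rw [precAll_pair, Ew_pair]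
        push_neg
        constructor
        · rintro ⟨h1, h2, h3, h4⟩
          exact ⟨(prec_iff_not_sublist (vstar_ne x)).mp h1,
            (prec_iff_not_sublist (fun hc => hyx hc.symm)).mp h3,
            (prec_iff_not_sublist (fun hc => hxy' hc.symm)).mp h2,
            (prec_iff_not_sublist (vstar_ne y)).mp h4⟩
        · rintro ⟨h1, h2, h3, h4⟩
          exact ⟨(prec_iff_not_sublist (vstar_ne x)).mpr h1,
            (prec_iff_not_sublist (fun hc => hxy' hc.symm)).mpr h3,
            (prec_iff_not_sublist (fun hc => hyx hc.symm)).mpr h2,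
            (prec_iff_not_sublist (vstar_ne y)).mpr h4⟩
      rw [key u, key v, hE' x y]
  · -- (b) x mixed, y not mixed
    rintro ⟨hmx, hmy⟩
    have hysu : vstar y ∉ u := fun hc => hmy ⟨hyu, hc⟩
    have hysv : vstar y ∉ v := fun hc => hysu ((balanced_mem hbal _).mpr hc)
    have hyx : y ≠ x := fun hc => hmy (hc ▸ hmx)
    have hyxs : y ≠ vstar x := fun hc =>
      hmy (by rw [hc]; exact ⟨hmx.2, by rw [vstar_vstar]; exact hmx.1⟩)
    constructor
    · have key : ∀ w : Word, vstar y ∉ w → (PrecAll w [x] [vstar x, y] ↔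
          ¬ Ew w (fun a => a = x ∨ a = vstar y)) := by
        intro w hyw
        rw [precAll_single_pair, Ew_pair]
        push_neg
        constructor
        · rintro ⟨h1, h2⟩
          refine ⟨(prec_iff_not_sublist (vstar_ne x)).mp h1, not_sublist_right hyw, ?_,
            not_sublist_right hyw⟩
          rw [vstar_vstar]
          exact (prec_iff_not_sublist hyx).mp h2
        · rintro ⟨h1, h2, h3, h4⟩
          rw [vstar_vstar] at h3
          exact ⟨(prec_iff_not_sublist (vstar_ne x)).mpr h1,
            (prec_iff_not_sublist hyx).mpr h3⟩
      rw [key u hysu, key v hysv, hE' x (vstar y)]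
    · have key : ∀ w : Word, vstar y ∉ w → (PrecAll w [x, y] [vstar x] ↔
          ¬ Ew w (fun a => a = x ∨ a = y)) := by
        intro w hyw
        rw [precAll_pair_single, Ew_pair]
        push_neg
        constructor
        · rintro ⟨h1, h2⟩
          exact ⟨(prec_iff_not_sublist (vstar_ne x)).mp h1,
            (prec_iff_not_sublist (fun hc => hyxs hc.symm)).mp h2,
            not_sublist_left hyw, not_sublist_left hyw⟩
        · rintro ⟨h1, h2, h3, h4⟩
          exact ⟨(prec_iff_not_sublist (vstar_ne x)).mpr h1,
            (prec_iff_not_sublist (fun hc => hyxs hc.symm)).mpr h2⟩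
      rw [key u hysu, key v hysv, hE' x y]
  · -- (c) x, y both unmixed
    rintro ⟨hmx, hmy⟩
    have hxsu : vstar x ∉ u := fun hc => hmx ⟨hxu, hc⟩
    have hysu : vstar y ∉ u := fun hc => hmy ⟨hyu, hc⟩
    have hxsv : vstar x ∉ v := fun hc => hxsu ((balanced_mem hbal _).mpr hc)
    have hysv : vstar y ∉ v := fun hc => hysu ((balanced_mem hbal _).mpr hc)
    by_cases hxy : x = y
    · subst hxy
      constructor
      · intro hp; exact absurd hp (not_prec_self hxu)
      · intro hp; exact absurd hp (not_prec_self ((balanced_mem hbal x).mp hxu))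
    · have key : ∀ w : Word, vstar x ∉ w → vstar y ∉ w → (Prec w x y ↔
          ¬ Ew w (fun a => a = vstar y ∨ a = x)) := by
        intro w hxw hyw
        rw [Ew_pair]
        push_neg
        constructor
        · intro h1
          refine ⟨?_, ?_, not_sublist_left hxw, not_sublist_left hxw⟩
          · rw [vstar_vstar]; exact not_sublist_right hyw
          · rw [vstar_vstar]
            exact (prec_iff_not_sublist (fun hc => hxy hc.symm)).mp h1
        · rintro ⟨h1, h2, h3, h4⟩
          rw [vstar_vstar] at h2
          exact (prec_iff_not_sublist (fun hc => hxy hc.symm)).mpr h2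
      rw [key u hxsu hysu, key v hxsv hysv, hE' (vstar y) x]

theorem condII_to_E {u v : Word} (hbal : BalancedId u v) (hcond : CondII u v)
    (S : Var → Prop) : Ew u S → Ew v S := by
  rintro ⟨a, b, ha, hb, hs⟩
  by_contra hEv
  have nov : ∀ γ δ : Var, S (vstar γ) → S δ → ¬ [γ, δ].Sublist v := by
    intro γ δ h1 h2 hc
    exact hEv ⟨vstar γ, δ, h1, h2, by rwa [vstar_vstar]⟩
  obtain ⟨α, rfl⟩ : ∃ α, a = vstar α := ⟨vstar a, (vstar_vstar a).symm⟩
  rw [vstar_vstar] at hs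
  have hSα : S (vstar α) := ha
  have hαu : α ∈ u := hs.subset (by simp)
  have hbu : b ∈ u := hs.subset (by simp)
  by_cases hab : α = b
  · -- same letter occurring twice
    subst hab
    have h2 : 2 ≤ u.count α := by
      have := hs.count_le α
      simpa using this
    rw [hbal α] at h2
    have hrep : [α, α].Sublist v := by
      have := (List.replicate_sublist_iff).mpr h2
      simpa [List.replicate] using this
    exact nov α α hSα hb hrep
  · have hPv1 : Prec v b α := (prec_iff_not_sublist hab).mpr (nov α b hSα hb)
    by_cases hmα : Mix u α <;> by_cases hmb : Mix u b
    · -- both mixed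
      have hαsu : vstar α ∈ u := hmα.2
      have h' := (hcond b (vstar α) hbu hαsu).1
        ⟨hmb, ⟨hαsu, by rw [vstar_vstar]; exact hmα.1⟩⟩
      rw [vstar_vstar] at h'
      have hPv : PrecAll v [b, vstar α] [vstar b, α] := by
        rw [precAll_pair]
        refine ⟨?_, hPv1, ?_, ?_⟩
        · exact (prec_iff_not_sublist (vstar_ne b)).mpr
            (nov (vstar b) b (by rwa [vstar_vstar]) hb)
        · refine (prec_iff_not_sublist ?_).mpr (nov (vstar b) (vstar α) (by rwa [vstar_vstar]) ha)
          exact fun hc => hab (vstar_inj hc).symm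
        · exact (prec_iff_not_sublist (Ne.symm (vstar_ne α))).mpr (nov α (vstar α) hSα ha)
      have hPu := h'.mpr hPv
      rw [precAll_pair] at hPu
      exact prec_absurd hs hPu.2.1
    · -- α mixed, b not mixed
      have hαsu : vstar α ∈ u := hmα.2
      have h' := ((hcond (vstar α) b hαsu hbu).2.1
        ⟨⟨hαsu, by rw [vstar_vstar]; exact hmα.1⟩, hmb⟩).2
      rw [vstar_vstar] at h'
      have hPv : PrecAll v [vstar α, b] [α] := by
        rw [precAll_pair_single]
        exact ⟨(prec_iff_not_sublist (Ne.symm (vstar_ne α))).mpr (nov α (vstar α) hSα ha), hPv1⟩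
      have hPu := h'.mpr hPv
      rw [precAll_pair_single] at hPu
      exact prec_absurd hs hPu.2
    · -- b mixed, α not mixed
      have h' := ((hcond b α hbu hαu).2.1 ⟨hmb, hmα⟩).1
      have hPv : PrecAll v [b] [vstar b, α] := by
        rw [precAll_single_pair]
        exact ⟨(prec_iff_not_sublist (vstar_ne b)).mpr
          (nov (vstar b) b (by rwa [vstar_vstar]) hb), hPv1⟩
      have hPu := h'.mpr hPv
      rw [precAll_single_pair] at hPu
      exact prec_absurd hs hPu.2
    · -- neither mixed
      have h' := (hcond b α hbu hαu).2.2 ⟨hmb, hmα⟩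
      exact prec_absurd hs (h'.mpr hPv1)
/-- **Theorem 4.3.** A word identity `u ≈ v` holds in `(hypo₂, ♯)` if and only if
(i) `u ≈ v` is balanced and (ii) the occurrence-order conditions (a)–(c) hold. -/
theorem stmt_8 (u v : Word) (hu : u ≠ []) (hv : v ≠ []) :
    SatW (hypoSharp 2) u v ↔ BalancedId u v ∧ CondII u v := by
  constructor
  · intro h
    have hbal := satW_balanced h
    exact ⟨hbal, E_to_condII hbal (satW_E h)⟩
  · rintro ⟨hbal, hcond⟩
    exact E_to_satW hbal fun S =>
      ⟨condII_to_E hbal hcond S, condII_to_E (balanced_symm hbal) (condII_symm hbal hcond) S⟩
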